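/- For the barrier b_α, in the cusp Ω_{1,α} ∩ Ω (where x₁ ≤ 1/2 and x₂²e^{2/x₁^α} ≤ 1/4), the Hessian determinant satisfies det D²b_α = 2α²x₁^{−2}((1−a) + ((α−1+a(3α+1))/α)x₁^α + ((α−1−a(α+1))/α)x₁^{2α}) ≥ (3/2)α²x₁^{−2} ≥ 6α², where a = x₂²e^{2/x₁^α}. -/

import Mathlib

open Real

/-- The Hessian determinant of u : ℝ × ℝ → ℝ at p, via iterated Fréchet derivatives. -/
noncomputable def detD2 (u : ℝ × ℝ → ℝ) (p : ℝ × ℝ) : ℝ :=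
  fderiv ℝ (fun x => fderiv ℝ u x (1, 0)) p (1, 0) *
      fderiv ℝ (fun x => fderiv ℝ u x (0, 1)) p (0, 1) -
    fderiv ℝ (fun x => fderiv ℝ u x (0, 1)) p (1, 0) *
      fderiv ℝ (fun x => fderiv ℝ u x (1, 0)) p (0, 1)


lemma stmt17_derivAux1 (α c t : ℝ) (ht : 0 < t) :
    HasDerivAt (fun t : ℝ => t ^ α * Real.exp (c / t ^ α))
      (α * Real.exp (c / t ^ α) * (t ^ (α - 1) - c * t⁻¹)) t := by
  have hs : (0:ℝ) < t ^ α := Real.rpow_pos_of_pos ht α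
  have h1 : HasDerivAt (fun t : ℝ => t ^ α) (α * t ^ (α - 1)) t :=
    Real.hasDerivAt_rpow_const (Or.inl ht.ne')
  have h2 : HasDerivAt (fun t : ℝ => c / t ^ α)
      ((0 * t ^ α - c * (α * t ^ (α - 1))) / (t ^ α) ^ 2) t :=
    (hasDerivAt_const t c).div h1 hs.ne'
  have h4 := h1.mul h2.exp
  refine h4.congr_deriv ?_
  have e1 : t ^ (α - 1) = t ^ α / t := by rw [Real.rpow_sub ht, Real.rpow_one]
  rw [e1]; field_simp; ring

lemma stmt17_derivAux2 (α c t : ℝ) (ht : 0 < t) :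
    HasDerivAt (fun t : ℝ => α * Real.exp (c / t ^ α) * (t ^ (α - 1) - c * t⁻¹))
      (α * Real.exp (c / t ^ α) * t⁻¹ ^ 2 *
        (c ^ 2 * α * (t ^ α)⁻¹ + c * (1 - α) + (α - 1) * t ^ α)) t := by
  have hs : (0:ℝ) < t ^ α := Real.rpow_pos_of_pos ht α
  have h1 : HasDerivAt (fun t : ℝ => t ^ α) (α * t ^ (α - 1)) t :=
    Real.hasDerivAt_rpow_const (Or.inl ht.ne')
  have h2 : HasDerivAt (fun t : ℝ => c / t ^ α)
      ((0 * t ^ α - c * (α * t ^ (α - 1))) / (t ^ α) ^ 2) t :=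
    (hasDerivAt_const t c).div h1 hs.ne'
  have h3 := (h2.exp).const_mul α
  have h5 : HasDerivAt (fun t : ℝ => t ^ (α - 1)) ((α - 1) * t ^ (α - 1 - 1)) t :=
    Real.hasDerivAt_rpow_const (Or.inl ht.ne')
  have h6 : HasDerivAt (fun t : ℝ => c * t⁻¹) (c * (-(t ^ 2)⁻¹)) t :=
    (hasDerivAt_inv ht.ne').const_mul c
  have h7 := h3.mul (h5.sub h6)
  refine h7.congr_deriv ?_
  simp only [Pi.sub_apply]
  have e1 : t ^ (α - 1) = t ^ α / t := by rw [Real.rpow_sub ht, Real.rpow_one]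
  have e2 : t ^ (α - 1 - 1) = t ^ α / t / t := by
    rw [Real.rpow_sub ht, Real.rpow_sub ht, Real.rpow_one]
  rw [e1, e2]; field_simp; ring

lemma stmt17_fderivVals (G K : ℝ → ℝ) (g1 k1 : ℝ) (x : ℝ × ℝ)
    (hG : HasDerivAt G g1 x.1) (hK : HasDerivAt K k1 x.1) :
    fderiv ℝ (fun p : ℝ × ℝ => G p.1 + K p.1 * p.2 ^ 2) x (1, 0) = g1 + k1 * x.2 ^ 2 ∧
    fderiv ℝ (fun p : ℝ × ℝ => G p.1 + K p.1 * p.2 ^ 2) x (0, 1) = K x.1 * (2 * x.2) := by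
  have hGf : HasFDerivAt (fun p : ℝ × ℝ => G p.1) (g1 • (ContinuousLinearMap.fst ℝ ℝ ℝ)) x :=
    hG.comp_hasFDerivAt x (hasFDerivAt_fst)
  have hKf : HasFDerivAt (fun p : ℝ × ℝ => K p.1) (k1 • (ContinuousLinearMap.fst ℝ ℝ ℝ)) x :=
    hK.comp_hasFDerivAt x (hasFDerivAt_fst)
  have hsq : HasFDerivAt (fun p : ℝ × ℝ => p.2 ^ 2)
      ((2 * x.2 ^ 1) • (ContinuousLinearMap.snd ℝ ℝ ℝ)) x :=
    (hasDerivAt_pow 2 x.2).comp_hasFDerivAt x (hasFDerivAt_snd)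
  rw [HasFDerivAt.fderiv (f := fun p : ℝ × ℝ => G p.1 + K p.1 * p.2 ^ 2) (hGf.add (hKf.mul hsq))]
  constructor
  · simp; ring
  · simp

lemma stmt17_fderivVals2 (K : ℝ → ℝ) (k1 : ℝ) (x : ℝ × ℝ) (hK : HasDerivAt K k1 x.1) :
    fderiv ℝ (fun p : ℝ × ℝ => K p.1 * (2 * p.2)) x (1, 0) = k1 * (2 * x.2) ∧
    fderiv ℝ (fun p : ℝ × ℝ => K p.1 * (2 * p.2)) x (0, 1) = K x.1 * 2 := by
  have hKf : HasFDerivAt (fun p : ℝ × ℝ => K p.1) (k1 • (ContinuousLinearMap.fst ℝ ℝ ℝ)) x :=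
    hK.comp_hasFDerivAt x (hasFDerivAt_fst)
  have h2 : HasFDerivAt (fun p : ℝ × ℝ => 2 * p.2)
      ((2:ℝ) • (ContinuousLinearMap.snd ℝ ℝ ℝ)) x := hasFDerivAt_snd.const_mul 2
  rw [HasFDerivAt.fderiv (f := fun p : ℝ × ℝ => K p.1 * (2 * p.2)) (hKf.mul h2)]
  constructor
  · simp; ring
  · simp

lemma stmt17_keyId (α t y : ℝ) (hα0 : 0 < α) (ht : 0 < t) :
    (α * Real.exp (-1 / t ^ α) * t⁻¹ ^ 2 *
        ((-1:ℝ) ^ 2 * α * (t ^ α)⁻¹ + (-1) * (1 - α) + (α - 1) * t ^ α) +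
      α * Real.exp (1 / t ^ α) * t⁻¹ ^ 2 *
        ((1:ℝ) ^ 2 * α * (t ^ α)⁻¹ + 1 * (1 - α) + (α - 1) * t ^ α) * y ^ 2) *
      (t ^ α * Real.exp (1 / t ^ α) * 2) -
    (α * Real.exp (1 / t ^ α) * (t ^ (α - 1) - 1 * t⁻¹) * (2 * y)) *
      (α * Real.exp (1 / t ^ α) * (t ^ (α - 1) - 1 * t⁻¹) * (2 * y)) =
    2 * α ^ 2 * t ^ (-2 : ℝ) *
      ((1 - y ^ 2 * Real.exp (2 / t ^ α)) +
        ((α - 1 + y ^ 2 * Real.exp (2 / t ^ α) * (3 * α + 1)) / α) * t ^ α +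
        ((α - 1 - y ^ 2 * Real.exp (2 / t ^ α) * (α + 1)) / α) * t ^ (2 * α)) := by
  have hs : (0:ℝ) < t ^ α := Real.rpow_pos_of_pos ht α
  have hE2 : Real.exp (2 / t ^ α) = Real.exp (1 / t ^ α) ^ 2 := by
    rw [show (2:ℝ) / t ^ α = 1 / t ^ α + 1 / t ^ α by ring, Real.exp_add, sq]
  have hEn : Real.exp (-1 / t ^ α) = (Real.exp (1 / t ^ α))⁻¹ := by
    rw [show (-1:ℝ) / t ^ α = -(1 / t ^ α) by ring, Real.exp_neg]
  have ht2 : t ^ (-2:ℝ) = t⁻¹ ^ 2 := by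
    rw [show (-2:ℝ) = -((2:ℕ):ℝ) by norm_num, Real.rpow_neg ht.le, Real.rpow_natCast,
      ← inv_pow]
  have ht2a : t ^ (2 * α) = (t ^ α) ^ 2 := by
    rw [mul_comm, Real.rpow_mul ht.le, show ((2:ℝ)) = ((2:ℕ):ℝ) by norm_num,
      Real.rpow_natCast]
  have htm1 : t ^ (α - 1) = t ^ α * t⁻¹ := by
    rw [Real.rpow_sub ht, Real.rpow_one, div_eq_mul_inv]
  rw [hE2, hEn, ht2, ht2a, htm1]
  field_simp
  ring

lemma stmt17_detD2_val (α : ℝ) (b : ℝ × ℝ → ℝ) (p : ℝ × ℝ) (hp : 0 < p.1)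
    (hbf : b =ᶠ[nhds p] fun q : ℝ × ℝ =>
      q.1 ^ α * Real.exp (-1 / q.1 ^ α) + q.1 ^ α * Real.exp (1 / q.1 ^ α) * q.2 ^ 2) :
    detD2 b p =
      (α * Real.exp (-1 / p.1 ^ α) * p.1⁻¹ ^ 2 *
          ((-1:ℝ) ^ 2 * α * (p.1 ^ α)⁻¹ + (-1) * (1 - α) + (α - 1) * p.1 ^ α) +
        α * Real.exp (1 / p.1 ^ α) * p.1⁻¹ ^ 2 *
          ((1:ℝ) ^ 2 * α * (p.1 ^ α)⁻¹ + 1 * (1 - α) + (α - 1) * p.1 ^ α) * p.2 ^ 2) *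
        (p.1 ^ α * Real.exp (1 / p.1 ^ α) * 2) -
      (α * Real.exp (1 / p.1 ^ α) * (p.1 ^ (α - 1) - 1 * p.1⁻¹) * (2 * p.2)) *
        (α * Real.exp (1 / p.1 ^ α) * (p.1 ^ (α - 1) - 1 * p.1⁻¹) * (2 * p.2)) := by
  set f : ℝ × ℝ → ℝ := fun q : ℝ × ℝ =>
      q.1 ^ α * Real.exp (-1 / q.1 ^ α) + q.1 ^ α * Real.exp (1 / q.1 ^ α) * q.2 ^ 2 with hf
  have hV : {q : ℝ × ℝ | 0 < q.1} ∈ nhds p :=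
    (isOpen_lt continuous_const continuous_fst).mem_nhds hp
  have hf1 : ∀ q : ℝ × ℝ, 0 < q.1 →
      fderiv ℝ f q (1, 0) =
        α * Real.exp (-1 / q.1 ^ α) * (q.1 ^ (α - 1) - -1 * q.1⁻¹) +
          α * Real.exp (1 / q.1 ^ α) * (q.1 ^ (α - 1) - 1 * q.1⁻¹) * q.2 ^ 2 := by
    intro q hq
    exact (stmt17_fderivVals (fun t => t ^ α * Real.exp (-1 / t ^ α))
      (fun t => t ^ α * Real.exp (1 / t ^ α)) _ _ q
      (stmt17_derivAux1 α (-1) q.1 hq) (stmt17_derivAux1 α 1 q.1 hq)).1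
  have hf2 : ∀ q : ℝ × ℝ, 0 < q.1 →
      fderiv ℝ f q (0, 1) = q.1 ^ α * Real.exp (1 / q.1 ^ α) * (2 * q.2) := by
    intro q hq
    exact (stmt17_fderivVals (fun t => t ^ α * Real.exp (-1 / t ^ α))
      (fun t => t ^ α * Real.exp (1 / t ^ α)) _ _ q
      (stmt17_derivAux1 α (-1) q.1 hq) (stmt17_derivAux1 α 1 q.1 hq)).2
  have hdb := hbf.fderiv (𝕜 := ℝ)
  have hev1 : (fun x => fderiv ℝ b x (1, 0)) =ᶠ[nhds p]
      (fun q : ℝ × ℝ => α * Real.exp (-1 / q.1 ^ α) * (q.1 ^ (α - 1) - -1 * q.1⁻¹) +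
        α * Real.exp (1 / q.1 ^ α) * (q.1 ^ (α - 1) - 1 * q.1⁻¹) * q.2 ^ 2) := by
    filter_upwards [hV, hdb] with q hq hq2
    rw [hq2, ← hf1 q hq]
  have hev2 : (fun x => fderiv ℝ b x (0, 1)) =ᶠ[nhds p]
      (fun q : ℝ × ℝ => q.1 ^ α * Real.exp (1 / q.1 ^ α) * (2 * q.2)) := by
    filter_upwards [hV, hdb] with q hq hq2
    rw [hq2, ← hf2 q hq]
  have hd11 := (stmt17_fderivVals
      (fun t => α * Real.exp (-1 / t ^ α) * (t ^ (α - 1) - -1 * t⁻¹))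
      (fun t => α * Real.exp (1 / t ^ α) * (t ^ (α - 1) - 1 * t⁻¹)) _ _ p
      (stmt17_derivAux2 α (-1) p.1 hp) (stmt17_derivAux2 α 1 p.1 hp))
  have hd2 := (stmt17_fderivVals2 (fun t => t ^ α * Real.exp (1 / t ^ α)) _ p
      (stmt17_derivAux1 α 1 p.1 hp))
  rw [detD2, hev1.fderiv_eq, hev2.fderiv_eq, hd11.1, hd11.2, hd2.1, hd2.2]

set_option maxHeartbeats 1000000 in
/-- for the barrier b_α = x₁^α e^{−1/x₁^α} + x₁^α e^{1/x₁^α} x₂²,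
in the cusp Ω_{1,α} ∩ Ω (0 < x₁ ≤ 1/2, |x₂| < ½e^{−1/x₁^α}), writing
a = x₂² e^{2/x₁^α}:
det D²b_α = 2α²x₁^{−2}((1−a) + ((α−1+a(3α+1))/α)x₁^α + ((α−1−a(α+1))/α)x₁^{2α})
≥ (3/2)α²x₁^{−2} ≥ 6α². -/
theorem stmt_17 (α : ℝ) (hα : 2 ≤ α)
    (b : ℝ × ℝ → ℝ)
    (hb : ∀ p : ℝ × ℝ, 0 < p.1 → |p.2| < (1 / 2) * Real.exp (-1 / p.1 ^ α) →
      b p = p.1 ^ α * Real.exp (-1 / p.1 ^ α) + p.1 ^ α * Real.exp (1 / p.1 ^ α) * p.2 ^ 2) :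
    ∀ p : ℝ × ℝ, 0 < p.1 → p.1 ≤ 1 / 2 → |p.2| < (1 / 2) * Real.exp (-1 / p.1 ^ α) →
      detD2 b p = 2 * α ^ 2 * p.1 ^ (-2 : ℝ) *
          ((1 - p.2 ^ 2 * Real.exp (2 / p.1 ^ α)) +
            ((α - 1 + p.2 ^ 2 * Real.exp (2 / p.1 ^ α) * (3 * α + 1)) / α) * p.1 ^ α +
            ((α - 1 - p.2 ^ 2 * Real.exp (2 / p.1 ^ α) * (α + 1)) / α) * p.1 ^ (2 * α)) ∧
      (3 / 2) * α ^ 2 * p.1 ^ (-2 : ℝ) ≤ detD2 b p ∧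
      6 * α ^ 2 ≤ detD2 b p := by
  intro p ht0 ht12 hy
  have hα0 : (0:ℝ) < α := by linarith
  -- the cusp region is open
  have hUopen : IsOpen {q : ℝ × ℝ | 0 < q.1 ∧ |q.2| < 1 / 2 * Real.exp (-1 / q.1 ^ α)} := by
    have hcont : ContinuousOn (fun q : ℝ × ℝ => 1 / 2 * Real.exp (-1 / q.1 ^ α) - |q.2|)
        {q : ℝ × ℝ | 0 < q.1} := by
      apply ContinuousOn.sub
      · apply ContinuousOn.mul continuousOn_const
        apply ContinuousOn.rexp
        apply ContinuousOn.div continuousOn_const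
        · exact ContinuousOn.rpow_const continuous_fst.continuousOn
            (fun q hq => Or.inl (ne_of_gt hq))
        · exact fun q hq => (Real.rpow_pos_of_pos hq α).ne'
      · exact continuous_snd.abs.continuousOn
    have h := hcont.isOpen_inter_preimage (isOpen_lt continuous_const continuous_fst)
      (isOpen_Ioi (a := (0:ℝ)))
    convert h using 1
    ext q
    simp only [Set.mem_setOf_eq, Set.mem_inter_iff, Set.mem_preimage, Set.mem_Ioi, sub_pos]
  have hU : {q : ℝ × ℝ | 0 < q.1 ∧ |q.2| < 1 / 2 * Real.exp (-1 / q.1 ^ α)} ∈ nhds p :=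
    hUopen.mem_nhds ⟨ht0, hy⟩
  have hbf : b =ᶠ[nhds p] fun q : ℝ × ℝ =>
      q.1 ^ α * Real.exp (-1 / q.1 ^ α) + q.1 ^ α * Real.exp (1 / q.1 ^ α) * q.2 ^ 2 :=
    Filter.eventuallyEq_of_mem hU (fun q hq => hb q hq.1 hq.2)
  have hdet : detD2 b p = 2 * α ^ 2 * p.1 ^ (-2 : ℝ) *
      ((1 - p.2 ^ 2 * Real.exp (2 / p.1 ^ α)) +
        ((α - 1 + p.2 ^ 2 * Real.exp (2 / p.1 ^ α) * (3 * α + 1)) / α) * p.1 ^ α +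
        ((α - 1 - p.2 ^ 2 * Real.exp (2 / p.1 ^ α) * (α + 1)) / α) * p.1 ^ (2 * α)) := by
    rw [stmt17_detD2_val α b p ht0 hbf]
    exact stmt17_keyId α p.1 p.2 hα0 ht0
  have hs : (0:ℝ) < p.1 ^ α := Real.rpow_pos_of_pos ht0 α
  have hT : p.1 ^ (-2:ℝ) = p.1⁻¹ ^ 2 := by
    rw [show (-2:ℝ) = -((2:ℕ):ℝ) by norm_num, Real.rpow_neg ht0.le, Real.rpow_natCast,
      ← inv_pow]
  have hs2 : p.1 ^ (2 * α) = (p.1 ^ α) ^ 2 := by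
    rw [mul_comm, Real.rpow_mul ht0.le, show ((2:ℝ)) = ((2:ℕ):ℝ) by norm_num,
      Real.rpow_natCast]
  have hinv2 : (2:ℝ) ≤ p.1⁻¹ := by
    have h1 : p.1 * p.1⁻¹ = 1 := mul_inv_cancel₀ ht0.ne'
    nlinarith [inv_pos.mpr ht0]
  have hysq : p.2 ^ 2 < (1 / 2 * Real.exp (-1 / p.1 ^ α)) ^ 2 := by
    have h1 := mul_self_lt_mul_self (abs_nonneg p.2) hy
    rw [abs_mul_abs_self p.2] at h1
    nlinarith [h1]
  have hprod : Real.exp (-1 / p.1 ^ α) ^ 2 * Real.exp (2 / p.1 ^ α) = 1 := by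
    rw [sq, ← Real.exp_add, ← Real.exp_add,
      show -1 / p.1 ^ α + -1 / p.1 ^ α + 2 / p.1 ^ α = 0 by field_simp; norm_num]
    exact Real.exp_zero
  have ha : p.2 ^ 2 * Real.exp (2 / p.1 ^ α) < 1 / 4 := by
    nlinarith [mul_lt_mul_of_pos_right hysq (Real.exp_pos (2 / p.1 ^ α)),
      Real.exp_pos (-1 / p.1 ^ α)]
  have ha0 : 0 ≤ p.2 ^ 2 * Real.exp (2 / p.1 ^ α) := by positivity
  set a := p.2 ^ 2 * Real.exp (2 / p.1 ^ α) with hadef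
  have hc1 : 0 ≤ (α - 1 + a * (3 * α + 1)) / α := div_nonneg (by nlinarith) hα0.le
  have hc2 : 0 ≤ (α - 1 - a * (α + 1)) / α := div_nonneg (by nlinarith) hα0.le
  have hE34 : (3:ℝ) / 4 ≤ 1 - a + (α - 1 + a * (3 * α + 1)) / α * p.1 ^ α +
      (α - 1 - a * (α + 1)) / α * p.1 ^ (2 * α) := by
    have h1 : 0 ≤ (α - 1 + a * (3 * α + 1)) / α * p.1 ^ α := mul_nonneg hc1 hs.le
    have h2 : 0 ≤ (α - 1 - a * (α + 1)) / α * p.1 ^ (2 * α) := by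
      apply mul_nonneg hc2
      rw [hs2]; positivity
    nlinarith
  set T := p.1 ^ (-2:ℝ) with hTdef
  set E := 1 - a + (α - 1 + a * (3 * α + 1)) / α * p.1 ^ α +
      (α - 1 - a * (α + 1)) / α * p.1 ^ (2 * α) with hEdef
  have hTpos : (0:ℝ) < T := by rw [hT]; positivity
  have hT4 : (4:ℝ) ≤ T := by rw [hT]; nlinarith
  have hpos : (0:ℝ) ≤ 2 * α ^ 2 * T := mul_nonneg (by positivity) hTpos.le
  have key := mul_le_mul_of_nonneg_left hE34 hpos
  have h5 := mul_le_mul_of_nonneg_left hT4 (show (0:ℝ) ≤ 3 / 2 * α ^ 2 by positivity)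
  clear_value T E
  refine ⟨hdet, ?_, ?_⟩
  · rw [hdet]; nlinarith [key]
  · rw [hdet]; nlinarith [key, h5]
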